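/- Let f, g : ℕ → ℝ with g(n) ≠ 0 for all n ≥ 2, and let a₁, a₂ ∈ ℝ with (a₁, a₂) ≠ (0, 0). Then there exist functions λ, μ : ℕ → ℝ satisfying f(n) = λ(n) + μ(n) and g(n) = −λ(n−1)μ(n) for all n ≥ 2, such that the sequence (a_n) defined by the initial values a₁, a₂ and the recurrence a_{n+1} = f(n)a_n + g(n)a_{n−1} for n ≥ 2 has b_n := a_{n+1} − λ(n)a_n ≠ 0 for every n ≥ 1. -/
import Mathlib

/-- Pair `(α n, β n)` so that `p_t(n) = α n * t + β n` satisfies the recurrence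
`p(n+2) = f(n+2) p(n+1) + g(n+2) p(n)` with `p(0) = 1`, `p(1) = t`. -/
private def auxP (f g : ℕ → ℝ) : ℕ → ℝ × ℝ
  | 0 => (0, 1)
  | 1 => (1, 0)
  | (n+2) => (f (n+2) * (auxP f g (n+1)).1 + g (n+2) * (auxP f g n).1,
              f (n+2) * (auxP f g (n+1)).2 + g (n+2) * (auxP f g n).2)

private lemma auxD (f g : ℕ → ℝ) (hg : ∀ n : ℕ, 2 ≤ n → g n ≠ 0) :
    ∀ n : ℕ, (auxP f g n).1 * (auxP f g (n+1)).2 - (auxP f g (n+1)).1 * (auxP f g n).2 ≠ 0 := by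
  intro n
  induction n with
  | zero => simp [auxP]
  | succ m ih =>
      have hexp : (auxP f g (m+1)).1 * (auxP f g (m+2)).2
          - (auxP f g (m+2)).1 * (auxP f g (m+1)).2
          = -g (m+2) * ((auxP f g m).1 * (auxP f g (m+1)).2
            - (auxP f g (m+1)).1 * (auxP f g m).2) := by
        show (auxP f g (m+1)).1 * (auxP f g (m+2)).2
          - (auxP f g (m+2)).1 * (auxP f g (m+1)).2 = _
        rw [show auxP f g (m+2) = (f (m+2) * (auxP f g (m+1)).1 + g (m+2) * (auxP f g m).1,
              f (m+2) * (auxP f g (m+1)).2 + g (m+2) * (auxP f g m).2) from rfl]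
        ring
      rw [hexp]
      exact mul_ne_zero (neg_ne_zero.2 (hg (m+2) (by omega))) ih

private lemma auxP_ne (f g : ℕ → ℝ) (hg : ∀ n : ℕ, 2 ≤ n → g n ≠ 0) (n : ℕ) :
    ¬((auxP f g n).1 = 0 ∧ (auxP f g n).2 = 0) := by
  rintro ⟨h1, h2⟩
  exact auxD f g hg n (by rw [h1, h2]; ring)

private lemma countable_line (c d : ℝ) (h : ¬(c = 0 ∧ d = 0)) :
    Set.Countable {t : ℝ | c * t + d = 0} := by
  rcases eq_or_ne c 0 with hc | hc
  · have hd : d ≠ 0 := fun hd => h ⟨hc, hd⟩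
    have : {t : ℝ | c * t + d = 0} = ∅ := by
      ext t; simp [hc, hd]
    rw [this]; exact Set.countable_empty
  · apply Set.Subsingleton.countable
    intro x hx y hy
    have hx' : c * x + d = 0 := hx
    have hy' : c * y + d = 0 := hy
    have : c * x = c * y := by linarith
    exact mul_left_cancel₀ hc this

/-- Given `f, g` with `g` nonvanishing for `n ≥ 2` and initial values `(a₁, a₂) ≠ (0, 0)`,
there are auxiliary functions `λ, μ` such that the auxiliary sequence
`b n = a (n+1) - λ(n) a n` of the recurrent sequence `a` never vanishes (for `n ≥ 1`). -/
theorem exists_aux_functions_b_nonzero (f g : ℕ → ℝ)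
    (hg : ∀ n : ℕ, 2 ≤ n → g n ≠ 0)
    (a₁ a₂ : ℝ) (h : ¬(a₁ = 0 ∧ a₂ = 0))
    (a : ℕ → ℝ) (ha1 : a 1 = a₁) (ha2 : a 2 = a₂)
    (hrec : ∀ n : ℕ, 2 ≤ n → a (n + 1) = f n * a n + g n * a (n - 1)) :
    ∃ l μ : ℕ → ℝ,
      (∀ n : ℕ, 2 ≤ n → f n = l n + μ n ∧ g n = -(l (n - 1) * μ n)) ∧
      (∀ n : ℕ, 1 ≤ n → a (n + 1) - l n * a n ≠ 0) := by
  classical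
  set B : Set ℝ :=
    (⋃ n : ℕ, {t : ℝ | (auxP f g n).1 * t + (auxP f g n).2 = 0}) ∪
      {t : ℝ | (-a₁) * t + a₂ = 0} with hB
  have hBc : B.Countable := by
    apply Set.Countable.union
    · exact Set.countable_iUnion fun n => countable_line _ _ (auxP_ne f g hg n)
    · apply countable_line
      rintro ⟨h1, h2⟩
      exact h ⟨by simpa using h1, h2⟩
  have hex : ∃ t : ℝ, t ∉ B := by
    by_contra hcon
    push_neg at hcon
    have : (Set.univ : Set ℝ).Countable := by
      have : (Set.univ : Set ℝ) ⊆ B := fun t _ => hcon t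
      exact hBc.mono this
    exact Cardinal.not_countable_real this
  obtain ⟨t, ht⟩ := hex
  -- p n = value of the "continuant" polynomial at t
  set p : ℕ → ℝ := fun n => (auxP f g n).1 * t + (auxP f g n).2 with hp
  have hpne : ∀ n : ℕ, p n ≠ 0 := by
    intro n hn
    exact ht (Set.mem_union_left _ (Set.mem_iUnion.2 ⟨n, hn⟩))
  have hprec : ∀ n : ℕ, p (n + 2) = f (n + 2) * p (n + 1) + g (n + 2) * p n := by
    intro n
    simp only [hp]
    rw [show auxP f g (n+2) = (f (n+2) * (auxP f g (n+1)).1 + g (n+2) * (auxP f g n).1,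
          f (n+2) * (auxP f g (n+1)).2 + g (n+2) * (auxP f g n).2) from rfl]
    ring
  set l : ℕ → ℝ := fun n => p n / p (n - 1) with hl
  set μ : ℕ → ℝ := fun n => f n - l n with hμ
  have hmain : ∀ n : ℕ, 2 ≤ n → f n = l n + μ n ∧ g n = -(l (n - 1) * μ n) := by
    intro n hn
    constructor
    · simp [hμ]
    · obtain ⟨m, rfl⟩ : ∃ m, n = m + 2 := ⟨n - 2, by omega⟩
      have h1 : p (m + 1) ≠ 0 := hpne _
      have h2 : p m ≠ 0 := hpne _
      have hrw : l (m + 2 - 1) = p (m + 1) / p m := by simp [hl]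
      have hrw2 : μ (m + 2) = f (m + 2) - p (m + 2) / p (m + 1) := by simp [hμ, hl]
      rw [hrw, hrw2]
      have := hprec m
      field_simp
      rw [this]; ring
  refine ⟨l, μ, hmain, ?_⟩
  intro n hn
  induction n, hn using Nat.le_induction with
  | base =>
      have hl1 : l 1 = t := by simp [hl, hp, auxP]
      rw [ha2, ha1, hl1]
      intro hzero
      exact ht (Set.mem_union_right _ (by simp only [Set.mem_setOf_eq]; linarith))
  | succ m hm ih =>
      have h2m : 2 ≤ m + 1 := by omega
      obtain ⟨hf, hgm⟩ := hmain (m + 1) h2m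
      have hμne : μ (m + 1) ≠ 0 := by
        intro h0
        exact hg (m + 1) h2m (by rw [hgm, h0]; ring)
      have hrw : a (m + 1 + 1) - l (m + 1) * a (m + 1)
          = μ (m + 1) * (a (m + 1) - l m * a m) := by
        have := hrec (m + 1) h2m
        simp only [Nat.add_sub_cancel] at this hgm
        rw [this, hf, hgm]
        ring
      rw [hrw]
      exact mul_ne_zero hμne ih
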